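/- Every non-identity injective morphism of necklaces t: R → R' is a composition of injective morphisms f with |V_{codomain} - J_{codomain}| - |V_{domain} - J_{domain}| = 1 (type (i) morphisms). In particular, the number of such factors equals |V_{R'} - J_{R'}| - |V_R - J_R|. -/

import Mathlib

/-! Combinatorial model of necklaces (wedges of simplices glued end to end),
encoded by the totally ordered vertex set `Fin (m+1)` together with the
subset `J` of joints (containing the first and last vertex); beads are the
intervals between consecutive joints. -/

structure Necklace where
  m : ℕ
  J : Finset (Fin (m + 1))
  zero_mem : 0 ∈ J
  last_mem : Fin.last m ∈ J

namespace Necklace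

/-- Two vertices lie in a common bead. -/
def SameBead (T : Necklace) (v w : Fin (T.m + 1)) : Prop :=
  ∃ a b : Fin (T.m + 1), a ∈ T.J ∧ b ∈ T.J ∧ (∀ c ∈ T.J, c ≤ a ∨ b ≤ c) ∧
    a ≤ v ∧ v ≤ b ∧ a ≤ w ∧ w ≤ b

/-- A morphism of necklaces: a vertex-level monotone map preserving the first
and last vertices and mapping each bead into a single bead.  (Such data is
equivalent to a simplicial map of necklaces preserving endpoints.) -/
structure Hom (T T' : Necklace) where
  f : Fin (T.m + 1) → Fin (T'.m + 1)
  mono : Monotone f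
  map_zero : f 0 = 0
  map_last : f (Fin.last T.m) = Fin.last T'.m
  bead : ∀ v w, SameBead T v w → SameBead T' (f v) (f w)

/-- Identity morphism. -/
def Hom.id (T : Necklace) : Hom T T :=
  ⟨_root_.id, monotone_id, rfl, rfl, fun _ _ h => h⟩

/-- Composition of morphisms of necklaces. -/
def Hom.comp {T T' T'' : Necklace} (g : Hom T' T'') (h : Hom T T') : Hom T T'' :=
  ⟨g.f ∘ h.f, g.mono.comp h.mono,
    by simp [Function.comp, h.map_zero, g.map_zero],
    by simp [Function.comp, h.map_last, g.map_last],
    fun v w hb => g.bead _ _ (h.bead v w hb)⟩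

/-- The set of non-joint vertices. -/
def nonJoints (T : Necklace) : Finset (Fin (T.m + 1)) := Finset.univ \ T.J

/-- The number of non-joint vertices, `N = |V_T - J_T|`. -/
def N (T : Necklace) : ℕ := T.nonJoints.card

/-- Enumeration of the non-joint vertices in increasing order. -/
noncomputable def enum (T : Necklace) : Fin T.N ≃o {x // x ∈ T.nonJoints} :=
  T.nonJoints.orderIsoOfFin rfl

/-- The subset of vertices encoded by a cube-vertex `s : Fin (N T) → Bool`
(the joints together with the non-joints whose coordinate is `true`). -/
noncomputable def subsetOf (T : Necklace) (s : Fin T.N → Bool) : Finset (Fin (T.m + 1)) :=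
  T.J ∪ (Finset.univ.filter (fun i => s i = true)).image (fun i => (T.enum i : Fin (T.m + 1)))

/-- The functor `P₁(g) : {0,1}^{N T} → {0,1}^{N T'}` induced by a morphism of
necklaces, expressed on vertices of the cubes via indicator sequences. -/
noncomputable def P1 {T T' : Necklace} (g : Hom T T') (s : Fin T.N → Bool) :
    Fin T'.N → Bool :=
  fun i' => decide ((T'.enum i' : Fin (T'.m + 1)) ∈ (T.subsetOf s).image g.f)

/-- Type (i) morphisms: injective with `|V' - J'| = |V - J| + 1`. -/
def TypeI {T T' : Necklace} (g : Hom T T') : Prop :=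
  Function.Injective g.f ∧ T'.N = T.N + 1

/-- Type (ii) morphisms: a wedge of identities and exactly one simplicial
codegeneracy; vertex-theoretically, a surjection collapsing exactly one pair of
consecutive vertices, not both of which are joints, mapping joints bijectively
onto joints. -/
def TypeII {T T' : Necklace} (g : Hom T T') : Prop :=
  Function.Surjective g.f ∧ Finset.image g.f T.J = T'.J ∧ Set.InjOn g.f (T.J : Set _) ∧
  ∃ v : Fin T.m, g.f v.castSucc = g.f v.succ ∧ ¬(v.castSucc ∈ T.J ∧ v.succ ∈ T.J) ∧
    ∀ a b, g.f a = g.f b → a = b ∨ ({a, b} : Finset _) = {v.castSucc, v.succ}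

/-- Type (iii) morphisms: collapse of a `Δ¹` bead (both of whose endpoints are
joints) to a point, injective elsewhere. -/
def TypeIII {T T' : Necklace} (g : Hom T T') : Prop :=
  Function.Surjective g.f ∧ Finset.image g.f T.J = T'.J ∧
  ∃ v : Fin T.m, g.f v.castSucc = g.f v.succ ∧ v.castSucc ∈ T.J ∧ v.succ ∈ T.J ∧
    ∀ a b, g.f a = g.f b → a = b ∨ ({a, b} : Finset _) = {v.castSucc, v.succ}

/-- `g` is an identity morphism of necklaces. -/
def IsIdentity {T T' : Necklace} (g : Hom T T') : Prop :=
  T = T' ∧ ∀ v, ((g.f v : ℕ) = (v : ℕ))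

/-- Compositions of morphisms of types (i), (ii), (iii). -/
inductive IsGenComp : ∀ {T T' : Necklace}, Hom T T' → Prop
  | of {T T'} (g : Hom T T') : TypeI g ∨ TypeII g ∨ TypeIII g → IsGenComp g
  | comp {T T' T''} (g : Hom T T') (g' : Hom T' T'') :
      IsGenComp g → IsGenComp g' → IsGenComp (g'.comp g)

/-- Compositions of `n` morphisms of type (i). -/
inductive IsCompI : ∀ {T T' : Necklace}, Hom T T' → ℕ → Prop
  | of {T T'} (g : Hom T T') : TypeI g → IsCompI g 1
  | comp {T T' T''} (g : Hom T T') (g' : Hom T' T'') {n n' : ℕ} :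
      IsCompI g n → IsCompI g' n' → IsCompI (g'.comp g) (n + n')

/-- The standard simplex `Δᵖ` regarded as a necklace with one bead. -/
def simplex (p : ℕ) : Necklace :=
  ⟨p, {0, Fin.last p}, by simp, by simp⟩

end Necklace

namespace Necklace

theorem SameBead.symm2 {T : Necklace} {v w : Fin (T.m + 1)} (h : T.SameBead v w) :
    T.SameBead w v := by
  obtain ⟨a, b, ha, hb, hc, h1, h2, h3, h4⟩ := h
  exact ⟨a, b, ha, hb, hc, h3, h4, h1, h2⟩

theorem sameBead_iff {T : Necklace} {v w : Fin (T.m + 1)} (hvw : v ≤ w) :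
    T.SameBead v w ↔ ∀ c ∈ T.J, ¬(v < c ∧ c < w) := by
  constructor
  · rintro ⟨a, b, ha, hb, hc, h1, h2, h3, h4⟩ c hcJ ⟨hc1, hc2⟩
    rcases hc c hcJ with h | h
    · exact absurd (lt_of_le_of_lt (h.trans h1) hc1) (lt_irrefl c)
    · exact absurd (lt_of_lt_of_le (hc2.trans_le h4) h) (lt_irrefl c)
  · intro h
    classical
    set A : Finset (Fin (T.m + 1)) := T.J.filter (fun c => c ≤ v) with hA
    set B : Finset (Fin (T.m + 1)) := T.J.filter (fun c => w ≤ c) with hB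
    have h0 : (0 : Fin (T.m + 1)) ∈ A := Finset.mem_filter.mpr ⟨T.zero_mem, Fin.zero_le v⟩
    have hl : Fin.last T.m ∈ B := Finset.mem_filter.mpr ⟨T.last_mem, Fin.le_last w⟩
    have hAne : A.Nonempty := ⟨0, h0⟩
    have hBne : B.Nonempty := ⟨_, hl⟩
    have haA := A.max'_mem hAne
    have hbB := B.min'_mem hBne
    have haJ := (Finset.mem_filter.mp haA).1
    have hav : A.max' hAne ≤ v := (Finset.mem_filter.mp haA).2
    have hbJ := (Finset.mem_filter.mp hbB).1
    have hwb : w ≤ B.min' hBne := (Finset.mem_filter.mp hbB).2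
    refine ⟨A.max' hAne, B.min' hBne, haJ, hbJ, ?_, hav, le_trans hvw hwb,
      le_trans hav hvw, hwb⟩
    intro c hcJ
    rcases le_or_gt c v with hcv | hvc
    · exact Or.inl (Finset.le_max' A c (Finset.mem_filter.mpr ⟨hcJ, hcv⟩))
    · rcases le_or_gt w c with hwc | hcw
      · exact Or.inr (Finset.min'_le B c (Finset.mem_filter.mpr ⟨hcJ, hwc⟩))
      · exact absurd ⟨hvc, hcw⟩ (h c hcJ)

theorem Hom.ext2 {T T' : Necklace} {g h : Hom T T'} (H : g.f = h.f) : g = h := by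
  cases g; cases h; cases H; rfl

theorem bead_of_ordered {T T' : Necklace} {f : Fin (T.m + 1) → Fin (T'.m + 1)}
    (H : ∀ v w, v ≤ w → T.SameBead v w → T'.SameBead (f v) (f w)) :
    ∀ v w, T.SameBead v w → T'.SameBead (f v) (f w) := by
  intro v w h
  rcases le_total v w with h' | h'
  · exact H v w h' h
  · exact (H w v h' h.symm2).symm2

theorem N_eq (T : Necklace) : T.N = T.m + 1 - T.J.card := by
  rw [N, nonJoints, Finset.card_sdiff_of_subset (Finset.subset_univ _)]
  simp

theorem card_J_le (T : Necklace) : T.J.card ≤ T.m + 1 := by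
  simpa using Finset.card_le_univ T.J

theorem map_nonjoint {T T' : Necklace} (t : Hom T T') (hinj : Function.Injective t.f)
    {v : Fin (T.m + 1)} (hv : v ∉ T.J) : t.f v ∉ T'.J := by
  have hsm : StrictMono t.f := t.mono.strictMono_of_injective hinj
  have hv0 : v.val ≠ 0 := fun h => hv ((Fin.ext (by simpa using h) : v = 0) ▸ T.zero_mem)
  have hvl : v.val ≠ T.m := fun h =>
    hv ((Fin.ext (by simpa using h) : v = Fin.last T.m) ▸ T.last_mem)
  have hvlt := v.isLt
  have hps : (⟨v.val - 1, by omega⟩ : Fin (T.m + 1)) ≤ ⟨v.val + 1, by omega⟩ := by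
    simp [Fin.le_def]; omega
  have hbead : T.SameBead ⟨v.val - 1, by omega⟩ ⟨v.val + 1, by omega⟩ := by
    rw [sameBead_iff hps]
    rintro c hcJ ⟨h1, h2⟩
    simp only [Fin.lt_def] at h1 h2
    exact hv ((Fin.ext (by omega) : c = v) ▸ hcJ)
  have hb' := t.bead _ _ hbead
  intro hfv
  have hpv : (⟨v.val - 1, by omega⟩ : Fin (T.m + 1)) < v := by rw [Fin.lt_def]; show v.val - 1 < v.val; omega
  have hvs : v < (⟨v.val + 1, by omega⟩ : Fin (T.m + 1)) := by simp [Fin.lt_def]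
  exact (sameBead_iff (t.mono hps)).mp hb' (t.f v) hfv ⟨hsm hpv, hsm hvs⟩

theorem joint_mem_range {T T' : Necklace} (t : Hom T T')
    {c' : Fin (T'.m + 1)} (hc' : c' ∈ T'.J) : ∃ v, t.f v = c' := by
  by_contra hno
  push_neg at hno
  have hc0 : c'.val ≠ 0 := fun h =>
    hno 0 (by rw [t.map_zero]; exact (Fin.ext (by simpa using h) : c' = 0).symm)
  have hcl : c'.val ≠ T'.m := by
    intro h
    refine hno (Fin.last T.m) ?_
    rw [t.map_last]
    exact (Fin.ext (by simpa using h) : c' = Fin.last T'.m).symm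
  classical
  set S : Finset (Fin (T.m + 1)) := Finset.univ.filter (fun v => (t.f v).val < c'.val)
    with hS
  have h0S : (0 : Fin (T.m + 1)) ∈ S := by
    refine Finset.mem_filter.mpr ⟨Finset.mem_univ _, ?_⟩
    rw [t.map_zero]
    show (0 : ℕ) < c'.val
    omega
  have hSne : S.Nonempty := ⟨0, h0S⟩
  have hvS : S.max' hSne ∈ S := S.max'_mem _
  have hvlt : (t.f (S.max' hSne)).val < c'.val := (Finset.mem_filter.mp hvS).2
  have hclt := c'.isLt
  have hvne : (S.max' hSne).val ≠ T.m := by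
    intro h
    have heq : S.max' hSne = Fin.last T.m := Fin.ext (by simpa using h)
    rw [heq, t.map_last] at hvlt
    exact absurd hvlt (by simp [Fin.last]; omega)
  have hvm := (S.max' hSne).isLt
  have hsS : (⟨(S.max' hSne).val + 1, by omega⟩ : Fin (T.m + 1)) ∉ S := by
    intro hmem
    have := Finset.le_max' S _ hmem
    simp [Fin.le_def] at this
  have hfs : c'.val < (t.f ⟨(S.max' hSne).val + 1, by omega⟩).val := by
    have h1 : ¬((t.f ⟨(S.max' hSne).val + 1, by omega⟩).val < c'.val) := by
      intro h; exact hsS (Finset.mem_filter.mpr ⟨Finset.mem_univ _, h⟩)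
    have h2 : t.f ⟨(S.max' hSne).val + 1, by omega⟩ ≠ c' := hno _
    have h3 : (t.f ⟨(S.max' hSne).val + 1, by omega⟩).val ≠ c'.val :=
      fun h => h2 (Fin.ext h)
    omega
  have hvs : S.max' hSne ≤ (⟨(S.max' hSne).val + 1, by omega⟩ : Fin (T.m + 1)) :=
    Fin.le_def.mpr (Nat.le_succ _)
  have hbead : T.SameBead (S.max' hSne) ⟨(S.max' hSne).val + 1, by omega⟩ := by
    rw [sameBead_iff hvs]
    rintro c hcJ ⟨h1, h2⟩
    simp only [Fin.lt_def] at h1 h2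
    omega
  exact (sameBead_iff (t.mono hvs)).mp (t.bead _ _ hbead) c' hc'
    ⟨Fin.lt_def.mpr hvlt, Fin.lt_def.mpr hfs⟩

theorem card_J'_le {T T' : Necklace} (t : Hom T T') (hinj : Function.Injective t.f) :
    T'.J.card ≤ T.J.card := by
  have himg : T'.J ⊆ T.J.image t.f := by
    intro c' hc'
    obtain ⟨v, rfl⟩ := joint_mem_range t hc'
    refine Finset.mem_image.mpr ⟨v, ?_, rfl⟩
    by_contra hvJ
    exact map_nonjoint t hinj hvJ hc'
  calc T'.J.card ≤ (T.J.image t.f).card := Finset.card_le_card himg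
    _ ≤ T.J.card := Finset.card_image_le

theorem necklace_ext {T T' : Necklace} (hm : T.m = T'.m)
    (hJ : T.J.image Fin.val = T'.J.image Fin.val) : T = T' := by
  cases T with | mk m J z l =>
  cases T' with | mk m' J' z' l' =>
  dsimp at hm hJ
  subst hm
  have : J = J' := Finset.image_injective Fin.val_injective hJ
  subst this
  rfl

end Necklace
namespace Necklace

theorem removal_peel {T T' : Necklace} (t : Hom T T') (hinj : Function.Injective t.f)
    {j : Fin (T.m + 1)} (hjJ : j ∈ T.J) (hjJ' : t.f j ∉ T'.J) :
    ∃ (R₂ : Necklace) (g : Hom T R₂) (t₂ : Hom R₂ T'),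
      TypeI g ∧ Function.Injective t₂.f ∧ t = t₂.comp g ∧ R₂.N = T.N + 1 := by
  have hj0 : j ≠ 0 := by rintro rfl; exact hjJ' (t.map_zero ▸ T'.zero_mem)
  have hjl : j ≠ Fin.last T.m := by rintro rfl; exact hjJ' (t.map_last ▸ T'.last_mem)
  have h0 : (0 : Fin (T.m + 1)) ∈ T.J.erase j :=
    Finset.mem_erase.mpr ⟨fun h => hj0 h.symm, T.zero_mem⟩
  have hl0 : Fin.last T.m ∈ T.J.erase j :=
    Finset.mem_erase.mpr ⟨fun h => hjl h.symm, T.last_mem⟩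
  have hNcalc : N (⟨T.m, T.J.erase j, h0, hl0⟩ : Necklace) = T.N + 1 := by
    have hcard := Finset.card_erase_of_mem hjJ
    have h1c : 1 ≤ T.J.card := Finset.card_pos.mpr ⟨0, T.zero_mem⟩
    have h2c := card_J_le T
    have e1 := N_eq T
    have e2 := N_eq (⟨T.m, T.J.erase j, h0, hl0⟩ : Necklace)
    dsimp at e2
    omega
  refine ⟨⟨T.m, T.J.erase j, h0, hl0⟩, ⟨_root_.id, monotone_id, rfl, rfl, ?_⟩,
    ⟨t.f, t.mono, t.map_zero, t.map_last, ?_⟩,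
    ⟨Function.injective_id, hNcalc⟩, hinj, Hom.ext2 rfl, hNcalc⟩
  · refine bead_of_ordered ?_
    intro v w hvw hb
    rw [sameBead_iff (T := T) hvw] at hb
    exact (sameBead_iff (T := ⟨T.m, T.J.erase j, h0, hl0⟩) hvw).mpr
      (fun c hc hlt => hb c (Finset.mem_of_mem_erase hc) hlt)
  · refine bead_of_ordered ?_
    intro v w hvw hb
    rw [sameBead_iff (T := ⟨T.m, T.J.erase j, h0, hl0⟩) hvw] at hb
    refine (sameBead_iff (T := T') (t.mono hvw)).mpr ?_
    rintro c' hc' ⟨h1, h2⟩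
    by_cases hjb : v < j ∧ j < w
    · rcases lt_trichotomy c' (t.f j) with hlt | heq | hgt
      · have hbead : T.SameBead v j := by
          rw [sameBead_iff (T := T) hjb.1.le]
          rintro c hcJ ⟨g1, g2⟩
          exact hb c (Finset.mem_erase.mpr ⟨ne_of_lt g2, hcJ⟩) ⟨g1, g2.trans hjb.2⟩
        exact (sameBead_iff (T := T') (t.mono hjb.1.le)).mp (t.bead _ _ hbead) c' hc' ⟨h1, hlt⟩
      · exact hjJ' (heq ▸ hc')
      · have hbead : T.SameBead j w := by
          rw [sameBead_iff (T := T) hjb.2.le]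
          rintro c hcJ ⟨g1, g2⟩
          exact hb c (Finset.mem_erase.mpr ⟨(ne_of_lt g1).symm, hcJ⟩) ⟨hjb.1.trans g1, g2⟩
        exact (sameBead_iff (T := T') (t.mono hjb.2.le)).mp (t.bead _ _ hbead) c' hc' ⟨hgt, h2⟩
    · have hbead : T.SameBead v w := by
        rw [sameBead_iff (T := T) hvw]
        rintro c hcJ ⟨g1, g2⟩
        by_cases hcj : c = j
        · exact hjb ⟨hcj ▸ g1, hcj ▸ g2⟩
        · exact hb c (Finset.mem_erase.mpr ⟨hcj, hcJ⟩) ⟨g1, g2⟩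
      exact (sameBead_iff (T := T') (t.mono hvw)).mp (t.bead _ _ hbead) c' hc' ⟨h1, h2⟩

def skipMap (n u : ℕ) (hn : 1 ≤ n) (i : Fin (n - 1 + 1)) : Fin (n + 1) :=
  if i.val < u then ⟨i.val, by have := i.isLt; omega⟩
  else ⟨i.val + 1, by have := i.isLt; omega⟩

theorem skipMap_val (n u : ℕ) (hn : 1 ≤ n) (i : Fin (n - 1 + 1)) :
    (skipMap n u hn i).val = if i.val < u then i.val else i.val + 1 := by
  unfold skipMap; split <;> rfl

theorem insertion_peel {T T' : Necklace} (t : Hom T T') (hinj : Function.Injective t.f)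
    {u' : Fin (T'.m + 1)} (hu : ∀ v, t.f v ≠ u') :
    ∃ (R₂ : Necklace) (t₁ : Hom T R₂) (g' : Hom R₂ T'),
      TypeI g' ∧ Function.Injective t₁.f ∧ t = g'.comp t₁ ∧ T'.N = R₂.N + 1 := by
  classical
  have hu'J : u' ∉ T'.J := fun h => by
    obtain ⟨v, hv⟩ := joint_mem_range t h; exact hu v hv
  have hu0 : u'.val ≠ 0 := by
    intro h
    refine hu 0 ?_
    rw [t.map_zero]
    exact Fin.ext (by simp [h])
  have hul : u'.val ≠ T'.m := by
    intro h
    refine hu (Fin.last T.m) ?_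
    rw [t.map_last]
    exact Fin.ext (by simp [h])
  have hn : 1 ≤ T'.m := by have := u'.isLt; omega
  have hu'le : u'.val ≤ T'.m - 1 := by have := u'.isLt; omega
  set ι := skipMap T'.m u'.val hn with hι
  have ιval : ∀ i, (ι i).val = if i.val < u'.val then i.val else i.val + 1 :=
    fun i => skipMap_val _ _ _ i
  have ι_lt : ∀ i j, ι i < ι j ↔ i < j := by
    intro i j
    have hi := i.isLt; have hj := j.isLt
    simp only [Fin.lt_def, ιval]
    split_ifs <;> omega
  have ι_le : ∀ i j, ι i ≤ ι j ↔ i ≤ j := by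
    intro i j
    have hi := i.isLt; have hj := j.isLt
    simp only [Fin.le_def, ιval]
    split_ifs <;> omega
  have ι_inj : Function.Injective ι := by
    intro i j h
    exact le_antisymm ((ι_le i j).mp h.le) ((ι_le j i).mp h.ge)
  have ι_surj : ∀ x : Fin (T'.m + 1), x.val ≠ u'.val → ∃ i, ι i = x := by
    intro x hx
    have hxl := x.isLt
    refine ⟨⟨if x.val < u'.val then x.val else x.val - 1, ?_⟩, ?_⟩
    · split_ifs <;> omega
    · refine Fin.ext ?_
      rw [ιval]
      dsimp
      split_ifs <;> omega
  have ι0 : ι 0 = 0 := by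
    refine Fin.ext ?_
    rw [ιval]
    rw [if_pos (by rw [Fin.val_zero]; omega)]
    simp
  have ιlast : ι (Fin.last (T'.m - 1)) = Fin.last T'.m := by
    refine Fin.ext ?_
    rw [ιval]
    simp only [Fin.val_last]
    split_ifs <;> omega
  set J₂ : Finset (Fin (T'.m - 1 + 1)) := Finset.univ.filter (fun i => ι i ∈ T'.J)
    with hJ₂
  have hz : (0 : Fin (T'.m - 1 + 1)) ∈ J₂ :=
    Finset.mem_filter.mpr ⟨Finset.mem_univ _, by rw [ι0]; exact T'.zero_mem⟩
  have hlast : Fin.last (T'.m - 1) ∈ J₂ :=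
    Finset.mem_filter.mpr ⟨Finset.mem_univ _, by rw [ιlast]; exact T'.last_mem⟩
  choose f₁ hf₁ using fun v => ι_surj (t.f v) (fun h => hu v (Fin.ext h))
  have f₁mono : Monotone f₁ := by
    intro a b h
    have hh := t.mono h
    rw [← hf₁ a, ← hf₁ b] at hh
    exact (ι_le _ _).mp hh
  have f₁zero : f₁ 0 = 0 := ι_inj (by rw [hf₁, t.map_zero, ι0])
  have f₁last : f₁ (Fin.last T.m) = Fin.last (T'.m - 1) :=
    ι_inj (by rw [hf₁, t.map_last, ιlast])
  have f₁inj : Function.Injective f₁ := by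
    intro a b h
    apply hinj
    rw [← hf₁ a, ← hf₁ b, h]
  have himg : J₂.image ι = T'.J := by
    ext x
    simp only [Finset.mem_image]
    constructor
    · rintro ⟨c, hc, rfl⟩; exact (Finset.mem_filter.mp hc).2
    · intro hx
      obtain ⟨c, rfl⟩ := ι_surj x (fun h => hu'J ((Fin.ext h : x = u') ▸ hx))
      exact ⟨c, Finset.mem_filter.mpr ⟨Finset.mem_univ _, hx⟩, rfl⟩
  have hNN : T'.N = N (⟨T'.m - 1, J₂, hz, hlast⟩ : Necklace) + 1 := by
    have hcard : J₂.card = T'.J.card := by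
      rw [← himg, Finset.card_image_of_injective _ ι_inj]
    have e1 := N_eq T'
    have e2 := N_eq (⟨T'.m - 1, J₂, hz, hlast⟩ : Necklace)
    dsimp at e2
    have hc2 := card_J_le (⟨T'.m - 1, J₂, hz, hlast⟩ : Necklace)
    dsimp at hc2
    have h4 := card_J_le T'
    have hcpos : 1 ≤ T'.J.card := Finset.card_pos.mpr ⟨0, T'.zero_mem⟩
    omega
  refine ⟨⟨T'.m - 1, J₂, hz, hlast⟩, ⟨f₁, f₁mono, f₁zero, f₁last, ?_⟩,
    ⟨ι, fun a b h => (ι_le a b).mpr h, ι0, ιlast, ?_⟩, ⟨ι_inj, hNN⟩, f₁inj,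
    Hom.ext2 (funext fun v => (hf₁ v).symm), hNN⟩
  · refine bead_of_ordered ?_
    intro v w hvw hb
    refine (sameBead_iff (T := ⟨T'.m - 1, J₂, hz, hlast⟩) (f₁mono hvw)).mpr ?_
    rintro c hc ⟨h1, h2⟩
    have hcJ' : ι c ∈ T'.J := (Finset.mem_filter.mp hc).2
    have h1' : t.f v < ι c := by rw [← hf₁ v]; exact (ι_lt _ _).mpr h1
    have h2' : ι c < t.f w := by rw [← hf₁ w]; exact (ι_lt _ _).mpr h2
    exact (sameBead_iff (T := T') (t.mono hvw)).mp (t.bead v w hb) (ι c) hcJ' ⟨h1', h2'⟩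
  · refine bead_of_ordered ?_
    intro v w hvw hb
    refine (sameBead_iff (T := T') ((ι_le v w).mpr hvw)).mpr ?_
    rintro c' hc' ⟨h1, h2⟩
    obtain ⟨c, rfl⟩ := ι_surj c' (fun h => hu'J ((Fin.ext h : c' = u') ▸ hc'))
    have hcJ₂ : c ∈ J₂ := Finset.mem_filter.mpr ⟨Finset.mem_univ _, hc'⟩
    exact (sameBead_iff (T := ⟨T'.m - 1, J₂, hz, hlast⟩) hvw).mp hb c hcJ₂
      ⟨(ι_lt _ _).mp h1, (ι_lt _ _).mp h2⟩

theorem isIdentity_of_N_eq {T T' : Necklace} (t : Hom T T') (hinj : Function.Injective t.f)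
    (hN : T'.N = T.N) : IsIdentity t := by
  classical
  have hm : T.m + 1 ≤ T'.m + 1 := by simpa using Fintype.card_le_of_injective t.f hinj
  have hcJ := card_J'_le t hinj
  have e1 := N_eq T
  have e2 := N_eq T'
  have h1 := card_J_le T
  have h2 := card_J_le T'
  have hmm : T.m = T'.m := by omega
  have hcc : T'.J.card = T.J.card := by omega
  have hsm : StrictMono t.f := t.mono.strictMono_of_injective hinj
  have hup : ∀ i : ℕ, ∀ h : i < T.m + 1, i ≤ (t.f ⟨i, h⟩).val := by
    intro i
    induction i with
    | zero => intro h; exact Nat.zero_le _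
    | succ k ih =>
      intro h
      have hk := ih (by omega)
      have hlt : (⟨k, by omega⟩ : Fin (T.m + 1)) < ⟨k + 1, h⟩ := by
        rw [Fin.lt_def]; exact Nat.lt_succ_self k
      have hh := hsm hlt
      rw [Fin.lt_def] at hh
      omega
  have hdown : ∀ j : ℕ, ∀ v : Fin (T.m + 1), v.val = T.m - j → (t.f v).val ≤ v.val := by
    intro j
    induction j with
    | zero =>
      intro v hv
      have hvl : v = Fin.last T.m := Fin.ext (by simpa using hv)
      rw [hvl, t.map_last]
      simp only [Fin.val_last]
      omega
    | succ k ih =>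
      intro v hv
      rcases le_or_gt T.m k with hk | hk
      · have hv0 : v = 0 := Fin.ext (by simp only [Fin.val_zero]; omega)
        rw [hv0, t.map_zero]
        simp
      · have hs : v.val + 1 < T.m + 1 := by omega
        have hsv : (t.f ⟨v.val + 1, hs⟩).val ≤ v.val + 1 := by
          have := ih ⟨v.val + 1, hs⟩ (by simp; omega)
          simpa using this
        have hlt : v < (⟨v.val + 1, hs⟩ : Fin (T.m + 1)) := by
          rw [Fin.lt_def]; exact Nat.lt_succ_self _
        have hh := hsm hlt
        rw [Fin.lt_def] at hh
        omega
  have hfv : ∀ v : Fin (T.m + 1), ((t.f v : ℕ)) = (v : ℕ) := by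
    intro v
    have ha := hup v.val v.isLt
    have hb := hdown (T.m - v.val) v (by have := v.isLt; omega)
    have hc : (⟨v.val, v.isLt⟩ : Fin (T.m + 1)) = v := Fin.ext rfl
    rw [hc] at ha
    omega
  refine ⟨necklace_ext hmm ?_, hfv⟩
  have hJT : Finset.univ.filter (fun v => t.f v ∈ T'.J) ⊆ T.J := by
    intro v hv
    by_contra hvJ
    exact map_nonjoint t hinj hvJ (Finset.mem_filter.mp hv).2
  have himg : (Finset.univ.filter (fun v => t.f v ∈ T'.J)).image t.f = T'.J := by
    ext x
    simp only [Finset.mem_image, Finset.mem_filter, Finset.mem_univ, true_and]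
    constructor
    · rintro ⟨v, hv, rfl⟩; exact hv
    · intro hx; obtain ⟨v, rfl⟩ := joint_mem_range t hx; exact ⟨v, hx, rfl⟩
  have hcJT : (Finset.univ.filter (fun v => t.f v ∈ T'.J)).card = T'.J.card := by
    conv_rhs => rw [← himg]
    rw [Finset.card_image_of_injective _ hinj]
  have hJTeq : Finset.univ.filter (fun v => t.f v ∈ T'.J) = T.J :=
    Finset.eq_of_subset_of_card_le hJT (by omega)
  have hJ'img : T.J.image t.f = T'.J := by rw [← hJTeq]; exact himg
  rw [← hJ'img, Finset.image_image]
  exact Finset.image_congr (fun v _ => (hfv v).symm)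

theorem compI_of_gap : ∀ (n : ℕ) {T T' : Necklace} (t : Hom T T'),
    Function.Injective t.f → T'.N = T.N + (n + 1) → IsCompI t (n + 1) := by
  intro n
  induction n with
  | zero =>
    intro T T' t hinj hN
    exact IsCompI.of t ⟨hinj, by omega⟩
  | succ n ih =>
    intro T T' t hinj hN
    classical
    by_cases hJ : ∃ j ∈ T.J, t.f j ∉ T'.J
    · obtain ⟨j, hjJ, hjJ'⟩ := hJ
      obtain ⟨R₂, g, t₂, hg, hinj₂, heq, hN₂⟩ := removal_peel t hinj hjJ hjJ'
      have h₂ : IsCompI t₂ (n + 1) := ih t₂ hinj₂ (by omega)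
      have hcomp := IsCompI.comp g t₂ (IsCompI.of g hg) h₂
      rw [← heq] at hcomp
      have h12 : 1 + (n + 1) = n + 1 + 1 := by omega
      rw [h12] at hcomp
      exact hcomp
    · push_neg at hJ
      have hcJ : T.J.card ≤ T'.J.card := by
        have hsub : T.J.image t.f ⊆ T'.J := by
          intro x hx
          obtain ⟨v, hv, rfl⟩ := Finset.mem_image.mp hx
          exact hJ v hv
        calc T.J.card = (T.J.image t.f).card :=
              (Finset.card_image_of_injective _ hinj).symm
          _ ≤ T'.J.card := Finset.card_le_card hsub
      have hexu : ∃ u' : Fin (T'.m + 1), ∀ v, t.f v ≠ u' := by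
        by_contra h
        push_neg at h
        have hsurj : Function.Surjective t.f := fun u' => h u'
        have hle1 : T'.m + 1 ≤ T.m + 1 := by
          simpa using Fintype.card_le_of_surjective t.f hsurj
        have e1 := N_eq T; have e2 := N_eq T'
        have h3 := card_J_le T; have h4 := card_J_le T'
        omega
      obtain ⟨u', hu⟩ := hexu
      obtain ⟨R₂, t₁, g', hg, hinj₁, heq, hN₂⟩ := insertion_peel t hinj hu
      have h₁ : IsCompI t₁ (n + 1) := ih t₁ hinj₁ (by omega)
      have hcomp := IsCompI.comp t₁ g' h₁ (IsCompI.of g' hg)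
      rw [← heq] at hcomp
      exact hcomp

end Necklace
open Necklace in
/-- Every non-identity injective morphism of necklaces is a
composition of type (i) morphisms, and the number of factors equals
`|V_{R'} - J_{R'}| - |V_R - J_R|`. -/
theorem injective_necklace_hom_factorization {R R' : Necklace} (t : Necklace.Hom R R')
    (hinj : Function.Injective t.f) (ht : ¬ Necklace.IsIdentity t) :
    ∃ n : ℕ, Necklace.IsCompI t n ∧ R.N + n = R'.N := by
  have hm : R.m + 1 ≤ R'.m + 1 := by simpa using Fintype.card_le_of_injective t.f hinj
  have hcJ := card_J'_le t hinj
  have e1 := N_eq R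
  have e2 := N_eq R'
  have h1 := card_J_le R
  have h2 := card_J_le R'
  have hle : R.N ≤ R'.N := by omega
  rcases Nat.lt_or_ge R.N R'.N with h | h
  · refine ⟨R'.N - R.N, ?_, by omega⟩
    have hk : R'.N = R.N + ((R'.N - R.N - 1) + 1) := by omega
    have hc := compI_of_gap (R'.N - R.N - 1) t hinj hk
    have heq : R'.N - R.N - 1 + 1 = R'.N - R.N := by omega
    rw [heq] at hc
    exact hc
  · exact absurd (isIdentity_of_N_eq t hinj (by omega)) ht
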